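/- In the free Lie algebra L, let P = [x,[y,[x,[x,y]]]] − 2·[y,[x,[x,[x,y]]]] − [y,[y,[y,[y,x]]]]. Then P ≠ 0 and [x, P] + [y, s(P)] = 0, where s(P) = P(−y,−x) is obtained by substituting −y for x and −x for y. -/

import Mathlib

noncomputable section

open scoped BigOperators

variable (K : Type) [Field K] [CharZero K]

/-- The free associative algebra `T = K⟨x,y⟩`, realized as the monoid algebra of the
free monoid on two generators. -/
abbrev T := MonoidAlgebra K (FreeMonoid (Fin 2))

/-- The word `v₁⋯vₙ` (a list of letters) as an element of `T`. -/
def word (l : List (Fin 2)) : T K := MonoidAlgebra.single (FreeMonoid.ofList l) 1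

/-- The generator `x`. -/
def X : T K := word K [0]

/-- The generator `y`. -/
def Y : T K := word K [1]

/-- Right-nested bracket `[v₁,[v₂,…,[vₙ₋₁,vₙ]…]]` of a word. -/
def brList : List (Fin 2) → T K
  | [] => 0
  | [v] => word K [v]
  | v :: rest => word K [v] * brList rest - brList rest * word K [v]

/-- The Dynkin map `γ : T → T`, sending a word `v₁⋯vₙ` to
`(1/n)[v₁,[v₂,…,[vₙ₋₁,vₙ]…]]` (and `1 ↦ 0`). -/
def dynkin : T K →ₗ[K] T K :=
  (Finsupp.linearCombination K fun w : FreeMonoid (Fin 2) =>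
    ((w.toList.length : K)⁻¹) • brList K w.toList) ∘ₗ
    (MonoidAlgebra.coeffLinearEquiv K).toLinearMap

attribute [local instance] LieRing.ofAssociativeRing

/-- The free Lie algebra `L` on `x, y`, as the Lie subalgebra of `T` generated by `x` and `y`. -/
def L : LieSubalgebra K (T K) := LieSubalgebra.lieSpan K (T K) {X K, Y K}

/-- The degree-`n` homogeneous component `T_n` of `T`, spanned by the words of length `n`. -/
def homog (n : ℕ) : Submodule K (T K) :=
  Submodule.span K { t | ∃ l : List (Fin 2), l.length = n ∧ t = word K l }

/-- The value `σ(i)` of a permutation of `{0,…,n-1}` on a natural number (junk value `0`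
outside the range). -/
def permVal {n : ℕ} (σ : Equiv.Perm (Fin n)) (i : ℕ) : ℕ :=
  if h : i < n then (σ ⟨i, h⟩ : ℕ) else 0

/-- The (0-indexed) descent set of a permutation: positions `i ∈ {0,…,n-2}` with
`σ(i) > σ(i+1)`. -/
def descSet {n : ℕ} (σ : Equiv.Perm (Fin n)) : Finset ℕ :=
  (Finset.range (n - 1)).filter fun i => permVal σ (i + 1) < permVal σ i

/-- The number of descents of a permutation. -/
def descNum {n : ℕ} (σ : Equiv.Perm (Fin n)) : ℕ := (descSet σ).card

/-- `DSet n k` is the set of permutations of `{0,…,n-1}` whose descent set is exactly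
the first `k` positions (this is `D_{1..k}` of the paper, in 0-indexed form). -/
def DSet (n k : ℕ) : Finset (Equiv.Perm (Fin n)) :=
  Finset.univ.filter fun σ => descSet σ = Finset.range k

/-- The Eulerian coefficient `c_σ = (-1)^{d(σ)} (binom (n-1) (d σ))⁻¹`. -/
def eulCoeff {n : ℕ} (σ : Equiv.Perm (Fin n)) : K :=
  (-1 : K) ^ descNum σ * ((Nat.choose (n - 1) (descNum σ) : K))⁻¹

/-- The degree-`n` Eulerian idempotent applied to the word `w₁⋯wₙ` given by
`v : Fin n → Fin 2`: `eₙ(w) = Σ_σ c_σ w^σ`. -/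
def eul (n : ℕ) (v : Fin n → Fin 2) : T K :=
  ∑ σ : Equiv.Perm (Fin n), eulCoeff K σ • word K (List.ofFn fun i => v (σ i))

/-- The `a`-part of an element of `T`: the linear map sending a word `a·w ↦ w` and
any word not starting with the letter `a` (or the empty word) to `0`.  For `p` with zero
constant term, `p = x·(letterPart 0 p) + y·(letterPart 1 p)`. -/
def letterPart (a : Fin 2) : T K →ₗ[K] T K :=
  (Finsupp.linearCombination K fun w : FreeMonoid (Fin 2) =>
    match w.toList with
    | [] => 0
    | b :: rest => if b = a then word K rest else 0) ∘ₗ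
    (MonoidAlgebra.coeffLinearEquiv K).toLinearMap

/-- The algebra endomorphism `s : T → T` with `s(x) = -y`, `s(y) = -x`. -/
def sMap : T K →ₐ[K] T K :=
  MonoidAlgebra.lift (R := K) (M := FreeMonoid (Fin 2)) (A := T K)
    (FreeMonoid.lift fun a : Fin 2 => if a = 0 then -(Y K) else -(X K))



omit [CharZero K] in
lemma word_mul' (l m : List (Fin 2)) : word K l * word K m = word K (l ++ m) := by
  simp [word, MonoidAlgebra.single_mul_single, FreeMonoid.ofList_append]

omit [CharZero K] in
lemma sMap_X : sMap K (X K) = -(Y K) := by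
  simp [sMap, X, word, MonoidAlgebra.lift_single]

omit [CharZero K] in
lemma sMap_Y : sMap K (Y K) = -(X K) := by
  simp [sMap, Y, word, MonoidAlgebra.lift_single]

omit [CharZero K] in
lemma sMap_lie (a b : T K) : sMap K ⁅a, b⁆ = ⁅sMap K a, sMap K b⁆ := by
  simp [Ring.lie_def]

omit [CharZero K] in
lemma word_apply' (l m : List (Fin 2)) :
    (word K l : T K).coeff (FreeMonoid.ofList m) = if l = m then 1 else 0 := by
  classical
  rw [word, MonoidAlgebra.coeff_single_apply]
  simp [EmbeddingLike.apply_eq_iff_eq]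

omit [CharZero K] in
lemma sub_apply' (a b : T K) (w : FreeMonoid (Fin 2)) : (a - b).coeff w = a.coeff w - b.coeff w := rfl

omit [CharZero K] in
lemma smul_apply' (c : K) (a : T K) (w : FreeMonoid (Fin 2)) : (c • a).coeff w = c * a.coeff w := rfl

/-- **Vergne's example.**  The Lie element
`P = [x,[y,[x,[x,y]]]] - 2[y,[x,[x,[x,y]]]] - [y,[y,[y,[y,x]]]]` is nonzero and satisfies
`[x, P] + [y, P(-y,-x)] = 0`. -/
theorem stmt14 (P : T K)
    (hP : P = ⁅X K, ⁅Y K, ⁅X K, ⁅X K, Y K⁆⁆⁆⁆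
        - (2 : K) • ⁅Y K, ⁅X K, ⁅X K, ⁅X K, Y K⁆⁆⁆⁆
        - ⁅Y K, ⁅Y K, ⁅Y K, ⁅Y K, X K⁆⁆⁆⁆) :
    P ≠ 0 ∧ ⁅X K, P⁆ + ⁅Y K, sMap K P⁆ = 0 := by
  constructor
  · intro h
    rw [hP] at h
    simp only [Ring.lie_def, X, Y, mul_sub, sub_mul, smul_sub, word_mul', List.cons_append,
      List.nil_append] at h
    have h2 := congrArg (fun f : T K => f.coeff (FreeMonoid.ofList [0,1,0,0,1])) h
    simp only [sub_apply', smul_apply', word_apply'] at h2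
    norm_num at h2
  · have hs : sMap K P = -⁅Y K, ⁅X K, ⁅Y K, ⁅Y K, X K⁆⁆⁆⁆
        + (2:K) • ⁅X K, ⁅Y K, ⁅Y K, ⁅Y K, X K⁆⁆⁆⁆ + ⁅X K, ⁅X K, ⁅X K, ⁅X K, Y K⁆⁆⁆⁆ := by
      rw [hP]
      simp only [map_sub, map_smul, sMap_lie, sMap_X, sMap_Y, lie_neg, neg_lie, neg_neg]
      module
    rw [hs, hP]
    simp only [Ring.lie_def, X, Y, mul_sub, sub_mul, mul_add, add_mul, mul_neg, neg_mul,
      smul_sub, smul_add, smul_neg, mul_smul_comm, smul_mul_assoc, word_mul',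
      List.cons_append, List.nil_append]
    module

end
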